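/- (Decomposition underlying the Kendall τ formula.) Let r_i and r_j be two full rankings over a finite set Σ with |Σ| = n, i.e., duplicate-free lists each containing every element of Σ, and let reverse(r_i) denote the list r_i in reverse order. Then |S_2(r_i, r_j)| + |S_2(reverse(r_i), r_j)| = n(n−1)/2, where S_2(r, s) is the set of length-2 lists that are subsequences of both r and s. -/

import Mathlib

open List Matrix

/-- The set of nonempty common subsequences of a family of rankings,
where a ranking is a list and "subsequence" is `List.Sublist`. -/
def commonSubseq {α : Type*} (R : Set (List α)) : Set (List α) :=
  {y | y ≠ [] ∧ ∀ r ∈ R, y.Sublist r}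

/-- `κ(R)`: the number of nonempty common subsequences of the family `R`. -/
noncomputable def kappa {α : Type*} (R : Set (List α)) : ℕ :=
  (commonSubseq R).ncard

/-- `κ_p(R)`: the number of nonempty common subsequences of `R` of length `p`. -/
noncomputable def kappaP {α : Type*} (p : ℕ) (R : Set (List α)) : ℕ :=
  {y ∈ commonSubseq R | y.length = p}.ncard

private lemma pair_sublist_or {α : Type*} {a b : α} {l : List α}
    (ha : a ∈ l) (hb : b ∈ l) (hab : a ≠ b) : [a, b] <+ l ∨ [b, a] <+ l := by
  induction l with
  | nil => simp at ha
  | cons c t ih =>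
    rcases eq_or_ne a c with rfl | hac
    · left
      have hb' : b ∈ t := by
        rcases List.mem_cons.1 hb with h | h
        · exact absurd h.symm hab
        · exact h
      exact List.cons_sublist_cons.2 ((List.singleton_sublist).2 hb')
    rcases eq_or_ne b c with rfl | hbc
    · right
      have ha' : a ∈ t := by
        rcases List.mem_cons.1 ha with h | h
        · exact absurd h hac
        · exact h
      exact List.cons_sublist_cons.2 ((List.singleton_sublist).2 ha')
    have ha' : a ∈ t := by
      rcases List.mem_cons.1 ha with h | h
      · exact absurd h hac
      · exact h
    have hb' : b ∈ t := by
      rcases List.mem_cons.1 hb with h | h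
      · exact absurd h hbc
      · exact h
    rcases ih ha' hb' with h | h
    · exact Or.inl (h.cons c)
    · exact Or.inr (h.cons c)

private lemma pair_sublist_not_both {α : Type*} {a b : α} {l : List α}
    (hl : l.Nodup) (h1 : [a, b] <+ l) (h2 : [b, a] <+ l) : a = b := by
  induction l with
  | nil => simp at h1
  | cons c t ih =>
    have hnd : t.Nodup := (List.nodup_cons.1 hl).2
    have hc : c ∉ t := (List.nodup_cons.1 hl).1
    cases h1 with
    | cons _ h1' =>
      cases h2 with
      | cons _ h2' => exact ih hnd h1' h2'
      | cons_cons h2' =>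
        -- b = c, [a] <+ t, but also a ∈ t from h1' and c appears... a,b ∈ t from h1'
        have : b ∈ t := h1'.subset (by simp)
        exact absurd this hc
    | cons_cons h1' =>
      -- a = c, [b] <+ t
      cases h2 with
      | cons _ h2' =>
        have : a ∈ t := h2'.subset (by simp)
        exact absurd this hc
      | cons_cons h2' =>
        -- b = c = a? here heads match: a = c and b = c impossible unless...
        -- In this branch h1 : a :: [b] <+ c :: t with a = c, and h2 : b :: [a] <+ c :: t with b = c
        rfl

/-- decomposition underlying the Kendall τ formula: for two full
duplicate-free rankings `ri, rj` over a finite universe of `n` items,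
`|S₂(ri, rj)| + |S₂(reverse ri, rj)| = n (n - 1) / 2`. -/
theorem kendall_decomposition {α : Type*} [Fintype α] (n : ℕ)
    (hn : Fintype.card α = n) (ri rj : List α)
    (hi : ri.Nodup) (hj : rj.Nodup)
    (hifull : ∀ σ : α, σ ∈ ri) (hjfull : ∀ σ : α, σ ∈ rj) :
    {y : List α | y.length = 2 ∧ y.Sublist ri ∧ y.Sublist rj}.ncard +
      {y : List α | y.length = 2 ∧ y.Sublist ri.reverse ∧ y.Sublist rj}.ncard =
      n * (n - 1) / 2 := by
  classical
  set S1 := {y : List α | y.length = 2 ∧ y.Sublist ri ∧ y.Sublist rj} with hS1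
  set S2 := {y : List α | y.length = 2 ∧ y.Sublist ri.reverse ∧ y.Sublist rj} with hS2
  set T := {y : List α | y.length = 2 ∧ y.Sublist rj} with hT
  -- reverse characterization
  have hrev : ∀ a b : α, [a, b] <+ ri.reverse ↔ [b, a] <+ ri := by
    intro a b
    constructor
    · intro h
      have := h.reverse
      simpa using this
    · intro h
      have := h.reverse
      simpa using this
  have hlen2 : ∀ y : List α, y.length = 2 → ∃ a b, y = [a, b] := by
    intro y hy
    match y, hy with
    | [a, b], _ => exact ⟨a, b, rfl⟩
  -- union
  have hunion : S1 ∪ S2 = T := by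
    ext y
    simp only [hS1, hS2, hT, Set.mem_union, Set.mem_setOf_eq]
    constructor
    · rintro (⟨h1, _, h2⟩ | ⟨h1, _, h2⟩) <;> exact ⟨h1, h2⟩
    · rintro ⟨h1, h2⟩
      obtain ⟨a, b, rfl⟩ := hlen2 y h1
      have hnd : ([a, b] : List α).Nodup := h2.nodup hj
      have hab : a ≠ b := by
        simp [List.nodup_cons] at hnd
        exact hnd
      rcases pair_sublist_or (hifull a) (hifull b) hab with h | h
      · exact Or.inl ⟨h1, h, h2⟩
      · exact Or.inr ⟨h1, (hrev a b).2 h, h2⟩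
  -- disjoint
  have hdisj : Disjoint S1 S2 := by
    rw [Set.disjoint_left]
    rintro y ⟨h1, hsi, hsj⟩ ⟨_, hsir, _⟩
    obtain ⟨a, b, rfl⟩ := hlen2 y h1
    have hab : a ≠ b := by
      have hnd : ([a, b] : List α).Nodup := hsi.nodup hi
      simp [List.nodup_cons] at hnd
      exact hnd
    exact hab (pair_sublist_not_both hi hsi ((hrev a b).1 hsir))
  -- T finite with cardinality choose
  have hTfin : T = ↑(rj.sublistsLen 2).toFinset := by
    ext y
    simp [hT, List.mem_sublistsLen, and_comm]
  have hS1fin : S1.Finite := by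
    apply Set.Finite.subset (Set.finite_coe_iff.1 ?_) (s := T)
    · rw [← hunion]; exact Set.subset_union_left
    · rw [hTfin]; exact Set.finite_coe_iff.2 (Set.toFinite _)
  have hS2fin : S2.Finite := by
    apply Set.Finite.subset (Set.finite_coe_iff.1 ?_) (s := T)
    · rw [← hunion]; exact Set.subset_union_right
    · rw [hTfin]; exact Set.finite_coe_iff.2 (Set.toFinite _)
  rw [← Set.ncard_union_eq hdisj hS1fin hS2fin, hunion]
  -- count
  have hTcard : T.ncard = (rj.sublistsLen 2).toFinset.card := by
    rw [hTfin, Set.ncard_coe_finset]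
  rw [hTcard]
  have hnodup : (rj.sublistsLen 2).Nodup := List.nodup_sublistsLen 2 hj
  rw [List.toFinset_card_of_nodup hnodup, List.length_sublistsLen]
  have hlen : rj.length = n := by
    have huniv : rj.toFinset = Finset.univ := by
      ext x; simp [hjfull x]
    have h := List.toFinset_card_of_nodup hj
    rw [huniv, Finset.card_univ, hn] at h
    omega
  rw [hlen, Nat.choose_two_right]
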